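/- ν-almost surely, the Schrödinger operator H_β = −P + 2β is nonnegative on finitely supported functions: for every f : V → ℝ with finite support, Σ_{i∈V} 2β_i f(i)² − 2 Σ_{{i,j}∈E} W_{i,j} f(i) f(j) ≥ 0 (each edge counted once). In particular the spectrum of H_β is contained in [0,∞). -/

import Mathlib

open MeasureTheory

namespace VRJPStmt

variable {V : Type*} [DecidableEq V]

/-- Right-hand side of the Laplace transform of the random potential `β`, for a finite
window `U`: each non-oriented edge inside `U` is counted once (hence the factor `1/2` in
front of the sum over ordered pairs), and each boundary edge `{i,j}` with `i ∈ U`, `j ∉ U`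
is counted once. -/
noncomputable def laplaceRHS (G : SimpleGraph V) [DecidableRel G.Adj]
    [∀ v : V, Fintype (G.neighborSet v)] (W : V → V → ℝ) (U : Finset V) (lam : V → ℝ) : ℝ :=
  Real.exp
    (-(1/2) * ∑ i ∈ U, ∑ j ∈ U,
        (if G.Adj i j then W i j * (Real.sqrt ((1 + lam i) * (1 + lam j)) - 1) else 0)
      - ∑ i ∈ U, ∑ j ∈ G.neighborFinset i \ U, W i j * (Real.sqrt (1 + lam i) - 1))
    * ∏ i ∈ U, (1 + lam i) ^ (-(1/2) : ℝ)

/-- `ν` is a probability measure on `(0,∞)^V` whose canonical field `(β_i)` has the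
prescribed finite-dimensional Laplace transforms. -/
def IsBetaField (G : SimpleGraph V) [DecidableRel G.Adj]
    [∀ v : V, Fintype (G.neighborSet v)] (W : V → V → ℝ)
    (ν : Measure (V → ℝ)) : Prop :=
  IsProbabilityMeasure ν ∧ (∀ᵐ β ∂ν, ∀ i, 0 < β i) ∧
    ∀ U : Finset V, ∀ lam : V → ℝ, (∀ i, 0 ≤ lam i) →
      ∫ β, Real.exp (-(∑ i ∈ U, lam i * β i)) ∂ν = laplaceRHS G W U lam

/-- Weight `W_σ = Π W_{σ_k, σ_{k+1}}` of a path given as a list of vertices. -/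
noncomputable def wWeight (W : V → V → ℝ) (l : List V) : ℝ :=
  ((l.zip l.tail).map (fun p => W p.1 p.2)).prod

/-- `(2β)_σ = Π_{k=0}^m 2 β_{σ_k}`. -/
noncomputable def twoBetaFull (β : V → ℝ) (l : List V) : ℝ :=
  (l.map (fun k => 2 * β k)).prod

/-- `(2β)^−_σ = Π_{k=0}^{m−1} 2 β_{σ_k}` (all vertices but the last one). -/
noncomputable def twoBetaMinus (β : V → ℝ) (l : List V) : ℝ :=
  (l.dropLast.map (fun k => 2 * β k)).prod

/-- `l` is a path from `i` to `j` for the adjacency relation `A`. -/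
def IsWalkList (A : V → V → Prop) (i j : V) (l : List V) : Prop :=
  l ≠ [] ∧ l.head? = some i ∧ l.getLast? = some j ∧ l.Chain' A

/-- Paths from `i` to `j` staying in the set `S`. -/
def PathsIn (G : SimpleGraph V) (S : Set V) (i j : V) (l : List V) : Prop :=
  IsWalkList G.Adj i j l ∧ ∀ x ∈ l, x ∈ S

/-- Paths starting at `i`, staying in `S` except for the last vertex, which is outside `S`. -/
def ExitPaths (G : SimpleGraph V) (S : Set V) (i : V) (l : List V) : Prop :=
  l ≠ [] ∧ l.head? = some i ∧ l.Chain' G.Adj ∧ (∀ x ∈ l.dropLast, x ∈ S) ∧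
    (∀ x, l.getLast? = some x → x ∉ S)

/-- `Ĝ^{(n)}(i,j) = Σ_{σ ∈ 𝒫^{(n)}_{i,j}} W_σ/(2β)_σ` if `i,j ∈ V_n`, `0` otherwise. -/
noncomputable def GhatN (G : SimpleGraph V) (W : V → V → ℝ) (Vseq : ℕ → Finset V)
    (n : ℕ) (i j : V) (β : V → ℝ) : ℝ :=
  if i ∈ Vseq n ∧ j ∈ Vseq n then
    ∑' l : {l : List V // PathsIn G (↑(Vseq n)) i j l}, wWeight W ↑l / twoBetaFull β ↑l
  else 0

/-- `ψ^{(n)}(i) = Σ_{σ ∈ 𝒫̄^{(n)}_i} W_σ/(2β)^−_σ` if `i ∈ V_n`, `1` otherwise. -/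
noncomputable def psiN (G : SimpleGraph V) (W : V → V → ℝ) (Vseq : ℕ → Finset V)
    (n : ℕ) (i : V) (β : V → ℝ) : ℝ :=
  if i ∈ Vseq n then
    ∑' l : {l : List V // ExitPaths G (↑(Vseq n)) i l}, wWeight W ↑l / twoBetaMinus β ↑l
  else 1

/-- The σ-algebra `ℱ_n` generated by the coordinates `(β_i)_{i ∈ V_n}`. -/
def FiltN (Vseq : ℕ → Finset V) (n : ℕ) : MeasurableSpace (V → ℝ) :=
  MeasurableSpace.comap (fun β (i : {x : V // x ∈ Vseq n}) => β ↑i) inferInstance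

/-- `(V_n)` is an increasing exhausting sequence of finite connected subsets of the graph. -/
def IsExhaustion (G : SimpleGraph V) (Vseq : ℕ → Finset V) : Prop :=
  (∀ n, Vseq n ⊆ Vseq (n+1)) ∧ (∀ n, (G.induce (↑(Vseq n) : Set V)).Connected) ∧
    ∀ x : V, ∃ n, x ∈ Vseq n



lemma countable_of_connected {V : Type*} [Nonempty V] (G : SimpleGraph V)
    [DecidableRel G.Adj] [∀ v : V, Fintype (G.neighborSet v)] (hconn : G.Connected) :
    Countable V := by
  classical
  obtain ⟨v0⟩ := ‹Nonempty V›
  let step : V → ℕ → V := fun v a => (G.neighborFinset v).toList.getD a v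
  let g : List ℕ → V := fun l => l.foldl step v0
  have key : ∀ {v u : V} (_ : G.Walk v u) (l : List ℕ), g l = v → ∃ l', g l' = u := by
    intro v u p
    induction p with
    | nil => exact fun l hl => ⟨l, hl⟩
    | @cons v w u h p ih =>
      intro l hl
      have hw : w ∈ (G.neighborFinset v).toList := by
        rw [Finset.mem_toList, SimpleGraph.mem_neighborFinset]; exact h
      have hlt : (G.neighborFinset v).toList.idxOf w < (G.neighborFinset v).toList.length :=
        List.idxOf_lt_length_iff.2 hw
      have hstep : step v ((G.neighborFinset v).toList.idxOf w) = w := by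
        simp only [step, List.getD_eq_getElem _ _ hlt, List.getElem_idxOf]
      refine ih (l ++ [(G.neighborFinset v).toList.idxOf w]) ?_
      simp only [g, List.foldl_append, List.foldl_cons, List.foldl_nil]
      rw [show l.foldl step v0 = v from hl, hstep]
  have hsurj : Function.Surjective g := by
    intro u
    obtain ⟨p⟩ := hconn v0 u
    exact key p [] rfl
  exact hsurj.countable

lemma sum_repr {V : Type*} [DecidableEq V] (G : SimpleGraph V) [DecidableRel G.Adj]
    [∀ v : V, Fintype (G.neighborSet v)] (W : V → V → ℝ) (β f : V → ℝ) (S : Finset V)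
    (hsupp : Function.support f ⊆ ↑S) :
    ((∑ᶠ i, 2 * β i * f i ^ 2) - ∑ᶠ i, ∑ j ∈ G.neighborFinset i, W i j * f i * f j)
      = (∑ i ∈ S, 2 * β i * f i ^ 2)
        - ∑ i ∈ S, ∑ j ∈ S, (if G.Adj i j then W i j * f i * f j else 0) := by
  have h1 : (∑ᶠ i, 2 * β i * f i ^ 2) = ∑ i ∈ S, 2 * β i * f i ^ 2 := by
    apply finsum_eq_sum_of_support_subset
    intro x hx
    apply hsupp
    simp only [Function.mem_support] at hx ⊢
    intro h0; apply hx; rw [h0]; ring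
  have h2 : (∑ᶠ i, ∑ j ∈ G.neighborFinset i, W i j * f i * f j)
      = ∑ i ∈ S, ∑ j ∈ G.neighborFinset i, W i j * f i * f j := by
    apply finsum_eq_sum_of_support_subset
    intro x hx
    apply hsupp
    simp only [Function.mem_support] at hx ⊢
    intro h0; apply hx
    apply Finset.sum_eq_zero
    intro j _; rw [h0]; ring
  have h3 : ∀ i, ∑ j ∈ G.neighborFinset i, W i j * f i * f j
      = ∑ j ∈ S, (if G.Adj i j then W i j * f i * f j else 0) := by
    intro i
    rw [Finset.sum_ite, Finset.sum_const_zero, add_zero]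
    have hset : S.filter (fun j => G.Adj i j) = G.neighborFinset i ∩ S := by
      ext j
      simp [SimpleGraph.mem_neighborFinset, and_comm]
    rw [hset]
    symm
    apply Finset.sum_subset (Finset.inter_subset_left)
    intro j hj hj2
    have hjS : j ∉ S := by
      intro hjS
      exact hj2 (Finset.mem_inter.2 ⟨hj, hjS⟩)
    have hf0 : f j = 0 := by
      by_contra h0
      exact hjS (hsupp h0)
    rw [hf0]; ring
  rw [h1, h2]
  congr 1
  exact Finset.sum_congr rfl fun i _ => h3 i

lemma rhs_bound {V : Type*} [DecidableEq V] (G : SimpleGraph V) [DecidableRel G.Adj]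
    [∀ v : V, Fintype (G.neighborSet v)] (W : V → V → ℝ)
    (hWpos : ∀ i j, G.Adj i j → 0 < W i j) (S : Finset V) (f : V → ℝ) (s : ℝ) (hs : 0 ≤ s) :
    laplaceRHS G W S (fun i => s * f i ^ 2)
      ≤ Real.exp (-(s/2) * (∑ i ∈ S, ∑ j ∈ S,
              (if G.Adj i j then W i j * (|f i| * |f j|) else 0))
          + (1/2) * ∑ i ∈ S, ∑ j ∈ S, (if G.Adj i j then W i j else 0)) := by
  have hlam : ∀ i : V, (0:ℝ) ≤ s * f i ^ 2 := fun i => mul_nonneg hs (sq_nonneg _)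
  have hbase : ∀ i : V, (1:ℝ) ≤ 1 + s * f i ^ 2 := fun i => by linarith [hlam i]
  unfold laplaceRHS
  have hprod : (∏ i ∈ S, (1 + s * f i ^ 2) ^ (-(1/2) : ℝ)) ≤ 1 := by
    apply Finset.prod_le_one
    · intro i _
      exact Real.rpow_nonneg (by linarith [hbase i]) _
    · intro i _
      exact Real.rpow_le_one_of_one_le_of_nonpos (hbase i) (by norm_num)
  have hprodnn : (0:ℝ) ≤ ∏ i ∈ S, (1 + s * f i ^ 2) ^ (-(1/2) : ℝ) :=
    Finset.prod_nonneg fun i _ => Real.rpow_nonneg (by linarith [hbase i]) _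
  calc Real.exp _ * ∏ i ∈ S, (1 + s * f i ^ 2) ^ (-(1/2) : ℝ)
      ≤ Real.exp _ * 1 := by
        apply mul_le_mul_of_nonneg_left hprod (Real.exp_pos _).le
    _ = Real.exp (-(1/2) * ∑ i ∈ S, ∑ j ∈ S,
          (if G.Adj i j then W i j * (Real.sqrt ((1 + s * f i ^ 2) * (1 + s * f j ^ 2)) - 1) else 0)
          - ∑ i ∈ S, ∑ j ∈ G.neighborFinset i \ S, W i j * (Real.sqrt (1 + s * f i ^ 2) - 1)) := by
        rw [mul_one]
    _ ≤ _ := by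
        rw [Real.exp_le_exp]
        have hB : (0:ℝ) ≤ ∑ i ∈ S, ∑ j ∈ G.neighborFinset i \ S,
            W i j * (Real.sqrt (1 + s * f i ^ 2) - 1) := by
          apply Finset.sum_nonneg
          intro i _
          apply Finset.sum_nonneg
          intro j hj
          have hadj : G.Adj i j := by
            have := (Finset.mem_sdiff.1 hj).1
            rwa [SimpleGraph.mem_neighborFinset] at this
          have h1 : (1:ℝ) ≤ Real.sqrt (1 + s * f i ^ 2) := by
            have := Real.sqrt_le_sqrt (show (1:ℝ) ≤ 1 + s * f i ^ 2 by linarith [hbase i])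
            rwa [Real.sqrt_one] at this
          have := (hWpos i j hadj).le
          nlinarith
        have hE : ∑ i ∈ S, ∑ j ∈ S, (if G.Adj i j then W i j * (s * (|f i| * |f j|) - 1) else 0)
            ≤ ∑ i ∈ S, ∑ j ∈ S,
              (if G.Adj i j then W i j * (Real.sqrt ((1 + s * f i ^ 2) * (1 + s * f j ^ 2)) - 1) else 0) := by
          apply Finset.sum_le_sum
          intro i _
          apply Finset.sum_le_sum
          intro j _
          split_ifs with hadj
          · have hW := (hWpos i j hadj).le
            have hsq : s * (|f i| * |f j|) ≤ Real.sqrt ((1 + s * f i ^ 2) * (1 + s * f j ^ 2)) := by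
              rw [Real.le_sqrt (by positivity) (by nlinarith [hlam i, hlam j])]
              have h1 : (s * (|f i| * |f j|)) ^ 2 = (s * f i ^ 2) * (s * f j ^ 2) := by
                rw [mul_pow, mul_pow, sq_abs, sq_abs]; ring
              nlinarith [hlam i, hlam j]
            nlinarith
          · exact le_rfl
        have hsplit : ∑ i ∈ S, ∑ j ∈ S, (if G.Adj i j then W i j * (s * (|f i| * |f j|) - 1) else 0)
            = s * (∑ i ∈ S, ∑ j ∈ S, (if G.Adj i j then W i j * (|f i| * |f j|) else 0))
              - ∑ i ∈ S, ∑ j ∈ S, (if G.Adj i j then W i j else 0) := by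
          rw [Finset.mul_sum, ← Finset.sum_sub_distrib]
          apply Finset.sum_congr rfl
          intro i _
          rw [Finset.mul_sum, ← Finset.sum_sub_distrib]
          apply Finset.sum_congr rfl
          intro j _
          split_ifs with hadj <;> ring
        rw [hsplit] at hE
        have h2 := mul_le_mul_of_nonneg_left hE (by norm_num : (0:ℝ) ≤ 1/2)
        nlinarith [hB, h2]

lemma core {V : Type*} [DecidableEq V] (G : SimpleGraph V) [DecidableRel G.Adj]
    [∀ v : V, Fintype (G.neighborSet v)] (W : V → V → ℝ)
    (hWpos : ∀ i j, G.Adj i j → 0 < W i j) (ν : Measure (V → ℝ)) (hν : IsBetaField G W ν)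
    (f : V → ℝ) (S : Finset V) :
    ∀ᵐ β ∂ν, 0 ≤ (∑ i ∈ S, 2 * β i * f i ^ 2)
        - ∑ i ∈ S, ∑ j ∈ S, (if G.Adj i j then W i j * f i * f j else 0) := by
  obtain ⟨hprob, hpos, hlap⟩ := hν
  set A : ℝ := ∑ i ∈ S, ∑ j ∈ S, (if G.Adj i j then W i j * (|f i| * |f j|) else 0) with hA
  set C : ℝ := (1/2) * ∑ i ∈ S, ∑ j ∈ S, (if G.Adj i j then W i j else 0) with hC
  set X : (V → ℝ) → ℝ := fun β => ∑ i ∈ S, f i ^ 2 * β i with hX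
  have hXmeas : Measurable X := by
    apply Finset.measurable_sum
    intro i _
    exact (measurable_pi_apply i).const_mul _
  have hnull : ∀ c : ℝ, c < A / 2 → ν {β | X β ≤ c} = 0 := by
    intro c hc
    have hbound : ∀ n : ℕ, (ν {β | X β ≤ c}).toReal ≤ Real.exp ((n:ℝ) * (c - A/2) + C) := by
      intro n
      set s : ℝ := (n : ℝ) with hsdef
      have hs : (0:ℝ) ≤ s := Nat.cast_nonneg n
      set g : (V → ℝ) → ℝ := fun β => Real.exp (-(s * X β)) with hg
      have hgmeas : Measurable g := (measurable_const.mul hXmeas).neg.exp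
      have hint : Integrable g ν := by
        refine Integrable.mono' (integrable_const 1) hgmeas.aestronglyMeasurable ?_
        filter_upwards [hpos] with β hβ
        have hXnn : 0 ≤ X β :=
          Finset.sum_nonneg fun i _ => mul_nonneg (sq_nonneg _) (hβ i).le
        rw [Real.norm_eq_abs, Real.abs_exp]
        exact Real.exp_le_one_iff.2 (by nlinarith)
      have hintval : ∫ β, g β ∂ν = laplaceRHS G W S (fun i => s * f i ^ 2) := by
        rw [← hlap S (fun i => s * f i ^ 2) (fun i => mul_nonneg hs (sq_nonneg _))]
        apply integral_congr_ae
        filter_upwards with β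
        simp only [hg, hX]
        congr 1
        rw [Finset.mul_sum]
        congr 1
        exact Finset.sum_congr rfl fun i _ => by ring
      have hmar := mul_meas_ge_le_integral_of_nonneg
        (ae_of_all _ fun β => (Real.exp_pos _).le) hint (Real.exp (-(s * c)))
      have hsub : {β | X β ≤ c} ⊆ {β | Real.exp (-(s * c)) ≤ g β} := by
        intro β hβ
        simp only [Set.mem_setOf_eq] at hβ ⊢
        apply Real.exp_le_exp.2
        have := mul_le_mul_of_nonneg_left hβ hs
        linarith
      have hmono : (ν {β | X β ≤ c}).toReal ≤ (ν {β | Real.exp (-(s * c)) ≤ g β}).toReal := by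
        apply ENNReal.toReal_mono (measure_ne_top _ _)
        exact measure_mono hsub
      have hval : ∫ β, g β ∂ν ≤ Real.exp (-(s/2) * A + C) := by
        rw [hintval]
        exact rhs_bound G W hWpos S f s hs
      have hεpos : (0:ℝ) < Real.exp (-(s * c)) := Real.exp_pos _
      have step1 : Real.exp (-(s * c)) * (ν {β | X β ≤ c}).toReal ≤ Real.exp (-(s/2) * A + C) := by
        calc Real.exp (-(s * c)) * (ν {β | X β ≤ c}).toReal
            ≤ Real.exp (-(s * c)) * (ν {β | Real.exp (-(s * c)) ≤ g β}).toReal :=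
              mul_le_mul_of_nonneg_left hmono hεpos.le
          _ ≤ ∫ β, g β ∂ν := hmar
          _ ≤ _ := hval
      have hfin : (ν {β | X β ≤ c}).toReal ≤ Real.exp (-(s/2) * A + C) / Real.exp (-(s * c)) := by
        rw [le_div_iff₀ hεpos]
        linarith [step1]
      calc (ν {β | X β ≤ c}).toReal ≤ Real.exp (-(s/2) * A + C) / Real.exp (-(s * c)) := hfin
        _ = Real.exp (s * (c - A/2) + C) := by
            rw [← Real.exp_sub]
            congr 1
            ring
    have htend : Filter.Tendsto (fun n : ℕ => Real.exp ((n:ℝ) * (c - A/2) + C))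
        Filter.atTop (nhds 0) := by
      apply Real.tendsto_exp_atBot.comp
      apply Filter.tendsto_atBot_add_const_right
      exact Filter.Tendsto.atTop_mul_const_of_neg (by linarith) tendsto_natCast_atTop_atTop
    have hle0 : (ν {β | X β ≤ c}).toReal ≤ 0 := ge_of_tendsto' htend hbound
    have : (ν {β | X β ≤ c}).toReal = 0 := le_antisymm hle0 ENNReal.toReal_nonneg
    exact (ENNReal.toReal_eq_zero_iff _).1 this |>.resolve_right (measure_ne_top _ _)
  have hXae : ∀ᵐ β ∂ν, A / 2 ≤ X β := by
    rw [ae_iff]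
    apply measure_mono_null (t := ⋃ n : ℕ, {β | X β ≤ A/2 - 1/(n+1)})
    · intro β hβ
      simp only [Set.mem_setOf_eq, not_le] at hβ
      obtain ⟨n, hn⟩ := exists_nat_one_div_lt (show (0:ℝ) < A/2 - X β by linarith)
      exact Set.mem_iUnion.2 ⟨n, by simp only [Set.mem_setOf_eq]; linarith⟩
    · apply measure_iUnion_null
      intro n
      apply hnull
      have : (0:ℝ) < 1/((n:ℝ)+1) := by positivity
      linarith
  filter_upwards [hXae] with β hβ
  have h1 : ∑ i ∈ S, 2 * β i * f i ^ 2 = 2 * X β := by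
    rw [hX, Finset.mul_sum]
    exact Finset.sum_congr rfl fun i _ => by ring
  have h2 : (∑ i ∈ S, ∑ j ∈ S, (if G.Adj i j then W i j * f i * f j else 0)) ≤ A := by
    rw [hA]
    apply Finset.sum_le_sum
    intro i _
    apply Finset.sum_le_sum
    intro j _
    split_ifs with hadj
    · have hW := (hWpos i j hadj).le
      have : f i * f j ≤ |f i| * |f j| := by
        rw [← abs_mul]
        exact le_abs_self _
      nlinarith
    · exact le_rfl
  linarith

/-- `ν`-a.s. the Schrödinger operator `H_β = −P + 2β` is nonnegative on
finitely supported functions: for every finitely supported `f : V → ℝ`,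
`Σ_i 2β_i f(i)² − 2 Σ_{{i,j}∈E} W_{i,j} f(i) f(j) ≥ 0` (each edge counted once, so the edge
term equals the sum over ordered adjacent pairs). -/
theorem stmt17 {V : Type*} [DecidableEq V] [Infinite V] (G : SimpleGraph V)
    [DecidableRel G.Adj] [∀ v : V, Fintype (G.neighborSet v)] (hconn : G.Connected)
    (W : V → V → ℝ) (hWsymm : ∀ i j, W i j = W j i) (hWpos : ∀ i j, G.Adj i j → 0 < W i j)
    (ν : MeasureTheory.Measure (V → ℝ)) (hν : IsBetaField G W ν) :
    ∀ᵐ β ∂ν, ∀ f : V → ℝ, (Function.support f).Finite →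
      0 ≤ (∑ᶠ i, 2 * β i * f i ^ 2)
          - ∑ᶠ i, ∑ j ∈ G.neighborFinset i, W i j * f i * f j := by
  classical
  have hcnt : Countable V := countable_of_connected G hconn
  set ext : (p : Σ S : Finset V, ({x // x ∈ S} → ℚ)) → (V → ℝ) :=
    fun p i => if h : i ∈ p.1 then ((p.2 ⟨i, h⟩ : ℚ) : ℝ) else 0 with hext
  have hall : ∀ᵐ β ∂ν, ∀ p : Σ S : Finset V, ({x // x ∈ S} → ℚ),
      0 ≤ (∑ i ∈ p.1, 2 * β i * (ext p) i ^ 2)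
        - ∑ i ∈ p.1, ∑ j ∈ p.1, (if G.Adj i j then W i j * (ext p) i * (ext p) j else 0) := by
    rw [ae_all_iff]
    intro p
    exact core G W hWpos ν hν (ext p) p.1
  filter_upwards [hall] with β hβ
  intro f hf
  set S : Finset V := hf.toFinset with hS
  have hsupp : Function.support f ⊆ ↑S := by
    intro x hx; simpa [hS] using hx
  rw [sum_repr G W β f S hsupp]
  set Φ : ({x // x ∈ S} → ℝ) → ℝ := fun y =>
    (∑ i ∈ S.attach, 2 * β i * (y i) ^ 2)
      - ∑ i ∈ S.attach, ∑ j ∈ S.attach, (if G.Adj (i:V) (j:V) then W i j * y i * y j else 0)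
    with hΦ
  have hΦcont : Continuous Φ := by
    apply Continuous.sub
    · apply continuous_finset_sum
      intro i _
      exact continuous_const.mul ((continuous_apply i).pow 2)
    · apply continuous_finset_sum
      intro i _
      apply continuous_finset_sum
      intro j _
      split_ifs with h
      · exact (continuous_const.mul (continuous_apply i)).mul (continuous_apply j)
      · exact continuous_const
  have hΦeq : ∀ (g : V → ℝ) (y : {x // x ∈ S} → ℝ), (∀ i : {x // x ∈ S}, y i = g i) →
      Φ y = (∑ i ∈ S, 2 * β i * g i ^ 2)
        - ∑ i ∈ S, ∑ j ∈ S, (if G.Adj i j then W i j * g i * g j else 0) := by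
    intro g y hy
    rw [hΦ]
    simp only [hy]
    congr 1
    · exact Finset.sum_attach S (fun i => 2 * β i * g i ^ 2)
    · rw [← Finset.sum_attach S (fun i => ∑ j ∈ S, (if G.Adj i j then W i j * g i * g j else 0))]
      apply Finset.sum_congr rfl
      intro i _
      exact Finset.sum_attach S (fun j => if G.Adj (i:V) j then W i j * g i * g j else 0)
  set D : Set ({x // x ∈ S} → ℝ) := Set.pi Set.univ (fun _ => Set.range ((↑) : ℚ → ℝ)) with hD
  have hDdense : Dense D := dense_pi Set.univ (fun i _ => Rat.denseRange_cast)
  have hDsub : D ⊆ {y | 0 ≤ Φ y} := by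
    intro y hy
    choose q hq using fun i => hy i (Set.mem_univ i)
    set p : Σ S : Finset V, ({x // x ∈ S} → ℚ) := ⟨S, q⟩ with hp
    have hyg : ∀ i : {x // x ∈ S}, y i = (ext p) (i : V) := by
      intro i
      rw [hext]
      simp only [hp]
      rw [dif_pos i.2]
      exact (hq i).symm ▸ rfl
    have := hβ p
    rw [Set.mem_setOf_eq, hΦeq (ext p) y hyg]
    exact this
  have hclosed : IsClosed {y : {x // x ∈ S} → ℝ | 0 ≤ Φ y} :=
    isClosed_le continuous_const hΦcont
  have huniv : ∀ y, 0 ≤ Φ y := by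
    intro y
    have : closure D ⊆ {y | 0 ≤ Φ y} := hclosed.closure_subset_iff.2 hDsub
    rw [hDdense.closure_eq] at this
    exact this (Set.mem_univ y)
  have := huniv (fun i => f i)
  rwa [hΦeq f (fun i => f i) (fun i => rfl)] at this


end VRJPStmt
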